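/- Let d ≥ 1, let γ ∈ (1, 2], and let ρ > 0, p > 0 and v ∈ ℝ^d with |v| < 1. Define the Lorentz factor Γ = 1/√(1 − |v|²), the specific enthalpy h = 1 + (γ/(γ−1))·(p/ρ), and the conservative variables D = ρΓ, m = ρhΓ²v, E = ρhΓ² − p. Then D > 0 and E > √(D² + |m|²); that is, (D, m, E) ∈ 𝒰'_ad. -/
import Mathlib


/-- Conservative variables obtained from admissible primitive variables
`(ρ, p, v)` (with `ρ > 0`, `p > 0`, `|v| < 1`) via the ideal-gas equation of
state belong to the admissible set `𝒰'_ad`. -/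
theorem cons_of_prim_admissible (d : ℕ) (hd : 1 ≤ d) (γ ρ p : ℝ)
    (v : EuclideanSpace ℝ (Fin d))
    (hγ1 : 1 < γ) (hγ2 : γ ≤ 2) (hρ : 0 < ρ) (hp : 0 < p) (hv : ‖v‖ < 1)
    (Γ h D E : ℝ) (m : EuclideanSpace ℝ (Fin d))
    (hΓ : Γ = 1 / Real.sqrt (1 - ‖v‖ ^ 2))
    (hh : h = 1 + γ / (γ - 1) * (p / ρ))
    (hD : D = ρ * Γ)
    (hm : m = (ρ * h * Γ ^ 2) • v)
    (hE : E = ρ * h * Γ ^ 2 - p) :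
    0 < D ∧ Real.sqrt (D ^ 2 + ‖m‖ ^ 2) < E := by
  set k : ℝ := γ / (γ - 1) with hk
  have hs0 : (0:ℝ) ≤ ‖v‖ := norm_nonneg v
  have h1 : (0:ℝ) < 1 - ‖v‖ ^ 2 := by nlinarith
  have hΓpos : 0 < Γ := by rw [hΓ]; positivity
  have hΓ2 : Γ ^ 2 * (1 - ‖v‖ ^ 2) = 1 := by
    rw [hΓ, div_pow, one_pow, Real.sq_sqrt h1.le]
    field_simp
  have hΓge1 : 1 ≤ Γ ^ 2 := by nlinarith [sq_nonneg ‖v‖, sq_nonneg Γ]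
  have hk2 : 2 ≤ k := by
    rw [hk, le_div_iff₀ (by linarith)]; linarith
  have hρh : ρ * h = ρ + k * p := by
    rw [hh]; field_simp
  have hhpos : (0:ℝ) < h := by
    nlinarith [div_pos hp hρ]
  have hA : 0 < ρ * h * Γ ^ 2 := mul_pos (mul_pos hρ hhpos) (pow_pos hΓpos 2)
  have hmn : ‖m‖ = ρ * h * Γ ^ 2 * ‖v‖ := by
    rw [hm, norm_smul, Real.norm_eq_abs, abs_of_pos hA]
  have hDpos : 0 < D := by rw [hD]; positivity
  have hEpos : 0 < E := by
    nlinarith [mul_le_mul_of_nonneg_left hΓge1 (mul_pos hρ hhpos).le]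
  refine ⟨hDpos, ?_⟩
  have key : E ^ 2 - D ^ 2 - ‖m‖ ^ 2
      = Γ ^ 2 * (2 * (k - 1) * ρ * p + k * (k - 2) * p ^ 2) + p ^ 2 := by
    rw [hE, hD, hmn]
    linear_combination (ρ ^ 2 * h ^ 2 * Γ ^ 2) * hΓ2
      + Γ ^ 2 * (ρ * h + ρ + k * p - 2 * p) * hρh
  have hbr : 0 < 2 * (k - 1) * ρ * p + k * (k - 2) * p ^ 2 := by
    nlinarith [mul_pos hρ hp, mul_nonneg (mul_nonneg (by linarith : (0:ℝ) ≤ k) (by linarith : (0:ℝ) ≤ k - 2)) (sq_nonneg p)]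
  have hlt : D ^ 2 + ‖m‖ ^ 2 < E ^ 2 := by
    have h2 := mul_pos (pow_pos hΓpos 2) hbr
    have h3 := pow_pos hp 2
    linarith [key]
  calc Real.sqrt (D ^ 2 + ‖m‖ ^ 2) < Real.sqrt (E ^ 2) :=
        Real.sqrt_lt_sqrt (by positivity) hlt
    _ = E := Real.sqrt_sq hEpos.le
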